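/- A symmetric real tensor A of order m and dimension n is semi-positive if and only if it is copositive. -/

import Mathlib

open Finset

/-- `(A x^{m-1})_i`: contraction of an order-`(m+1)` tensor with `m` copies of `x`. -/
def tcontr {m : ℕ} {ι : Type*} [Fintype ι] [DecidableEq ι]
    (A : (Fin (m + 1) → ι) → ℝ) (x : ι → ℝ) (i : ι) : ℝ :=
  ∑ g : Fin m → ι, A (Fin.cons i g) * ∏ t, x (g t)

/-- `A x^{m}` : the homogeneous form of an order-`(m+1)` tensor. -/
def tform {m : ℕ} {ι : Type*} [Fintype ι] [DecidableEq ι]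
    (A : (Fin (m + 1) → ι) → ℝ) (x : ι → ℝ) : ℝ :=
  ∑ f : Fin (m + 1) → ι, A f * ∏ t, x (f t)

def SemiPos {m : ℕ} {ι : Type*} [Fintype ι] [DecidableEq ι]
    (A : (Fin (m + 1) → ι) → ℝ) : Prop :=
  ∀ x : ι → ℝ, 0 ≤ x → x ≠ 0 → ∃ k, 0 < x k ∧ 0 ≤ tcontr A x k

def StrictSemiPos {m : ℕ} {ι : Type*} [Fintype ι] [DecidableEq ι]
    (A : (Fin (m + 1) → ι) → ℝ) : Prop :=
  ∀ x : ι → ℝ, 0 ≤ x → x ≠ 0 → ∃ k, 0 < x k ∧ 0 < tcontr A x k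

def Copos {m : ℕ} {ι : Type*} [Fintype ι] [DecidableEq ι]
    (A : (Fin (m + 1) → ι) → ℝ) : Prop :=
  ∀ x : ι → ℝ, 0 ≤ x → 0 ≤ tform A x

def StrictCopos {m : ℕ} {ι : Type*} [Fintype ι] [DecidableEq ι]
    (A : (Fin (m + 1) → ι) → ℝ) : Prop :=
  ∀ x : ι → ℝ, 0 ≤ x → x ≠ 0 → 0 < tform A x

/-- Symmetric tensor: entries invariant under any permutation of indices. -/
def SymT {m : ℕ} {ι : Type*} (A : (Fin (m + 1) → ι) → ℝ) : Prop :=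
  ∀ (f : Fin (m + 1) → ι) (σ : Equiv.Perm (Fin (m + 1))), A (f ∘ σ) = A f

/-- `x` solves the tensor complementarity problem TCP(q, A). -/
def TCPsol {m n : ℕ} (A : (Fin (m + 1) → Fin n) → ℝ) (q x : Fin n → ℝ) : Prop :=
  0 ≤ x ∧ (∀ i, 0 ≤ q i + tcontr A x i) ∧ (∑ i, x i * (q i + tcontr A x i)) = 0

/-- The principal sub-tensor of `A` with all indices in `N`. -/
def subT {m n : ℕ} (A : (Fin (m + 1) → Fin n) → ℝ) (N : Finset (Fin n)) :
    (Fin (m + 1) → {i // i ∈ N}) → ℝ :=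
  fun f => A fun t => (f t : Fin n)

-- product over erase 0
lemma prodErase {m : ℕ} (v : Fin (m + 1) → ℝ) :
    ∏ r ∈ univ.erase 0, v r = ∏ t : Fin m, v t.succ := by
  refine (Finset.prod_bij (fun (t : Fin m) _ => t.succ) ?_ ?_ ?_ ?_).symm
  · intro a _; simp [Fin.succ_ne_zero]
  · intro a _ b _ h; exact Fin.succ_injective _ h
  · intro r hr
    have hr0 : r ≠ 0 := (Finset.mem_erase.mp hr).1
    exact ⟨r.pred hr0, Finset.mem_univ _, Fin.succ_pred r hr0⟩
  · intro a _; rfl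

-- Euler identity
lemma euler {m : ℕ} {ι : Type*} [Fintype ι] [DecidableEq ι]
    (A : (Fin (m + 1) → ι) → ℝ) (x : ι → ℝ) :
    tform A x = ∑ i, x i * tcontr A x i := by
  rw [tform, ← Fintype.sum_equiv (Fin.consEquiv (fun _ => ι))
    (fun p => A (Fin.cons p.1 p.2) * ∏ t : Fin (m+1), x ((Fin.cons p.1 p.2 : Fin (m+1) → ι) t))
    (fun f => A f * ∏ t, x (f t)) (fun p => by simp [Fin.consEquiv])]
  rw [Fintype.sum_prod_type]
  refine Finset.sum_congr rfl fun i _ => ?_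
  rw [tcontr, Finset.mul_sum]
  refine Finset.sum_congr rfl fun g _ => ?_
  rw [Fin.prod_univ_succ]
  simp [mul_comm, mul_assoc, mul_left_comm]

lemma homog {m : ℕ} {ι : Type*} [Fintype ι] [DecidableEq ι]
    (A : (Fin (m + 1) → ι) → ℝ) (x : ι → ℝ) (c : ℝ) :
    tform A (c • x) = c ^ (m + 1) * tform A x := by
  rw [tform, tform, Finset.mul_sum]
  refine Finset.sum_congr rfl fun f _ => ?_
  simp only [Pi.smul_apply, smul_eq_mul, Finset.prod_mul_distrib, Finset.prod_const,
    Finset.card_univ, Fintype.card_fin]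
  ring

lemma tform_cont {m : ℕ} {ι : Type*} [Fintype ι] [DecidableEq ι]
    (A : (Fin (m + 1) → ι) → ℝ) : Continuous (tform A) := by
  refine continuous_finset_sum _ fun f _ => ?_
  exact continuous_const.mul (continuous_finset_prod _ fun t _ => continuous_apply _)

-- key derivative lemma
lemma key_deriv {m : ℕ} {ι : Type*} [Fintype ι] [DecidableEq ι]
    (A : (Fin (m + 1) → ι) → ℝ) (hA : SymT A) (x : ι → ℝ) (k : ι) :
    HasDerivAt (fun t : ℝ => tform A (fun i => x i + t * (if i = k then 1 else 0)))
      ((m + 1 : ℝ) * tcontr A x k) 0 := by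
  set δ : ι → ℝ := fun i => if i = k then 1 else 0 with hδ
  have hterm : ∀ f : Fin (m+1) → ι, HasDerivAt
      (fun t : ℝ => A f * ∏ s : Fin (m+1), (x (f s) + t * δ (f s)))
      (A f * ∑ s : Fin (m+1), (∏ r ∈ univ.erase s, x (f r)) * δ (f s)) 0 := by
    intro f
    have h1 : ∀ s : Fin (m+1), HasDerivAt (fun t : ℝ => x (f s) + t * δ (f s)) (δ (f s)) 0 := by
      intro s
      simpa using ((hasDerivAt_id (0:ℝ)).mul_const (δ (f s))).const_add (x (f s))
    have := (HasDerivAt.finset_prod (u := univ) (fun s _ => h1 s)).const_mul (A f)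
    simpa using this
  have H := HasDerivAt.fun_sum (u := (univ : Finset (Fin (m+1) → ι))) (fun f _ => hterm f)
  have hformeq : (fun t : ℝ => ∑ f : Fin (m+1) → ι,
      A f * ∏ s : Fin (m+1), (x (f s) + t * δ (f s)))
      = fun t : ℝ => tform A (fun i => x i + t * δ i) := by
    funext t; rw [tform]
  rw [hformeq] at H
  convert H using 1
  · rfl
  · rfl
  -- algebra: the derivative equals (m+1) * tcontr A x k
  have step1 : ∀ s : Fin (m+1),
      (∑ f : Fin (m+1) → ι, A f * ((∏ r ∈ univ.erase s, x (f r)) * δ (f s)))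
      = tcontr A x k := by
    intro s
    have swapeq : ∑ f : Fin (m+1) → ι, A f * ((∏ r ∈ univ.erase s, x (f r)) * δ (f s))
        = ∑ h : Fin (m+1) → ι, A h * ((∏ r ∈ univ.erase 0, x (h r)) * δ (h 0)) := by
      refine (Fintype.sum_equiv (Equiv.arrowCongr (Equiv.swap (0 : Fin (m+1)) s)
        (Equiv.refl ι)) _ _ fun h => ?_).symm
      have h1 : (Equiv.arrowCongr (Equiv.swap (0 : Fin (m+1)) s) (Equiv.refl ι)) h
          = h ∘ (Equiv.swap (0 : Fin (m+1)) s) := by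
        funext r
        simp [Equiv.arrowCongr, Equiv.swap_apply_def]
      have hAh : A (h ∘ (Equiv.swap (0 : Fin (m+1)) s)) = A h := hA h _
      have hs0 : (h ∘ (Equiv.swap (0 : Fin (m+1)) s)) s = h 0 := by
        simp [Equiv.swap_apply_right]
      have hmap : (univ.erase (0 : Fin (m+1))).map
          (Equiv.swap (0 : Fin (m+1)) s).toEmbedding = univ.erase s := by
        rw [Finset.map_erase, Finset.map_univ_equiv]
        simp [Equiv.swap_apply_left]
      have hprod : ∏ r ∈ univ.erase s, x ((h ∘ (Equiv.swap (0 : Fin (m+1)) s)) r)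
          = ∏ r ∈ univ.erase (0 : Fin (m+1)), x (h r) := by
        rw [← hmap, Finset.prod_map]
        exact Finset.prod_congr rfl fun r _ => by simp
      rw [h1, hAh, hs0, hprod]
    rw [swapeq]
    rw [← Fintype.sum_equiv (Fin.consEquiv (fun _ => ι))
      (fun p : ι × (Fin m → ι) => A (Fin.cons p.1 p.2) *
        ((∏ r ∈ univ.erase (0 : Fin (m+1)), x ((Fin.cons p.1 p.2 : Fin (m+1) → ι) r)) * δ p.1))
      (fun h => A h * ((∏ r ∈ univ.erase (0:Fin (m+1)), x (h r)) * δ (h 0)))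
      (fun p => by simp [Fin.consEquiv])]
    rw [Fintype.sum_prod_type, tcontr]
    have inner : ∀ i : ι, (∑ g : Fin m → ι, A (Fin.cons i g) *
        ((∏ r ∈ univ.erase (0 : Fin (m+1)), x ((Fin.cons i g : Fin (m+1) → ι) r)) * δ i))
        = δ i * ∑ g : Fin m → ι, A (Fin.cons i g) * ∏ t, x (g t) := by
      intro i
      rw [Finset.mul_sum]
      refine Finset.sum_congr rfl fun g _ => ?_
      rw [prodErase]
      simp only [Fin.cons_succ]
      ring
    rw [Finset.sum_congr rfl fun i _ => inner i]
    rw [hδ]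
    simp
  calc (m + 1 : ℝ) * tcontr A x k = ∑ _s : Fin (m+1), tcontr A x k := by
        simp [Finset.sum_const, Finset.card_univ, mul_comm]
    _ = ∑ s : Fin (m+1), ∑ f : Fin (m+1) → ι,
          A f * ((∏ r ∈ univ.erase s, x (f r)) * δ (f s)) := by
        exact Finset.sum_congr rfl fun s _ => (step1 s).symm
    _ = ∑ f : Fin (m+1) → ι, A f * ∑ s : Fin (m+1),
          (∏ r ∈ univ.erase s, x (f r)) * δ (f s) := by
        rw [Finset.sum_comm]
        exact Finset.sum_congr rfl fun f _ => by rw [Finset.mul_sum]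

lemma tform_zero {m : ℕ} {ι : Type*} [Fintype ι] [DecidableEq ι]
    (A : (Fin (m + 1) → ι) → ℝ) : tform A 0 = 0 := by
  simp [tform]

theorem stmt_13 {m n : ℕ} (A : (Fin (m + 1) → Fin n) → ℝ) (hA : SymT A) :
    SemiPos A ↔ Copos A := by
  constructor
  · -- SemiPos → Copos
    intro hsp
    by_contra hc
    simp only [Copos, not_forall, not_le] at hc
    obtain ⟨z, hz0, hzneg⟩ := hc
    have hz0' : ∀ i, 0 ≤ z i := fun i => hz0 i
    have hzne : z ≠ 0 := by
      rintro rfl; rw [tform_zero] at hzneg; exact lt_irrefl 0 hzneg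
    obtain ⟨j, hj⟩ : ∃ j, 0 < z j := by
      obtain ⟨j, hj⟩ := Function.ne_iff.mp hzne
      exact ⟨j, lt_of_le_of_ne (hz0' j) (Ne.symm hj)⟩
    have hzsum : 0 < ∑ i, z i :=
      Finset.sum_pos' (fun i _ => hz0' i) ⟨j, Finset.mem_univ j, hj⟩
    -- the scaled z lies in the standard simplex
    have hzs : (∑ i, z i)⁻¹ • z ∈ stdSimplex ℝ (Fin n) := by
      constructor
      · intro i; exact mul_nonneg (inv_nonneg.mpr hzsum.le) (hz0' i)
      · simp only [Pi.smul_apply, smul_eq_mul, ← Finset.mul_sum]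
        exact inv_mul_cancel₀ hzsum.ne'
    obtain ⟨xs, hxsS, hmin⟩ := (isCompact_stdSimplex ℝ (Fin n)).exists_isMinOn
      ⟨_, hzs⟩ (tform_cont A).continuousOn
    set μ := tform A xs with hμ
    have hμmin : ∀ y ∈ stdSimplex ℝ (Fin n), μ ≤ tform A y := fun y hy => hmin hy
    -- global lower bound
    have hglobal : ∀ y : Fin n → ℝ, (∀ i, 0 ≤ y i) →
        μ * (∑ i, y i) ^ (m + 1) ≤ tform A y := by
      intro y hy
      rcases eq_or_ne y 0 with rfl | hyne
      · simp [tform_zero]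
      · obtain ⟨j', hj'⟩ := Function.ne_iff.mp hyne
        have hys : 0 < ∑ i, y i := Finset.sum_pos' (fun i _ => hy i)
          ⟨j', Finset.mem_univ j', lt_of_le_of_ne (hy j') (Ne.symm hj')⟩
        have hmem : (∑ i, y i)⁻¹ • y ∈ stdSimplex ℝ (Fin n) := by
          constructor
          · intro i; exact mul_nonneg (inv_nonneg.mpr hys.le) (hy i)
          · simp only [Pi.smul_apply, smul_eq_mul, ← Finset.mul_sum]
            exact inv_mul_cancel₀ hys.ne'
        have h1 := hμmin _ hmem
        have h2 : tform A y = (∑ i, y i) ^ (m + 1) * tform A ((∑ i, y i)⁻¹ • y) := by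
          rw [← homog]
          congr 1
          rw [smul_smul, mul_inv_cancel₀ hys.ne', one_smul]
        rw [h2, mul_comm μ]
        exact mul_le_mul_of_nonneg_left h1 (pow_nonneg hys.le _)
    have hμneg : μ < 0 := by
      have h1 := hμmin _ hzs
      have h2 : tform A ((∑ i, z i)⁻¹ • z) = ((∑ i, z i)⁻¹) ^ (m + 1) * tform A z :=
        homog A z _
      have h3 : ((∑ i, z i)⁻¹) ^ (m + 1) * tform A z < 0 :=
        mul_neg_of_pos_of_neg (pow_pos (inv_pos.mpr hzsum) _) hzneg
      calc μ ≤ _ := h1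
        _ < 0 := by rw [h2]; exact h3
    have hxs0 : (0 : Fin n → ℝ) ≤ xs := fun i => hxsS.1 i
    have hxsne : xs ≠ 0 := by
      intro h
      have := hxsS.2
      rw [h] at this
      simp at this
    obtain ⟨k, hk, hkc⟩ := hsp xs hxs0 hxsne
    -- derivative argument at the minimizer
    set δ : Fin n → ℝ := fun i => if i = k then 1 else 0 with hδ
    have hsumδ : ∑ i, δ i = 1 := by simp [hδ]
    set F : ℝ → ℝ := fun t =>
      tform A (fun i => xs i + t * δ i) - μ * (1 + t) ^ (m + 1) with hF
    have hd1 := key_deriv A hA xs k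
    have hd2 : HasDerivAt (fun t : ℝ => μ * (1 + t) ^ (m + 1)) (μ * (m + 1)) 0 := by
      have := (((hasDerivAt_id (0:ℝ)).const_add 1).pow (m + 1)).const_mul μ
      simpa [mul_comm] using this
    have hdF : HasDerivAt F ((m + 1 : ℝ) * tcontr A xs k - μ * (m + 1)) 0 := hd1.sub hd2
    have hF0 : F 0 = 0 := by
      simp [hF, hμ]
    have hlocal : IsLocalMin F 0 := by
      have hmem0 : Set.Ioo (-(xs k)) (xs k) ∈ nhds (0 : ℝ) :=
        Ioo_mem_nhds (neg_lt_zero.mpr hk) hk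
      refine Filter.eventually_of_mem hmem0 fun t ht => ?_
      rw [hF0]
      have hy0 : ∀ i, 0 ≤ xs i + t * δ i := by
        intro i
        by_cases hik : i = k
        · subst hik
          simp only [hδ, if_pos rfl, mul_one]
          linarith [ht.1]
        · simp only [hδ, if_neg hik, mul_zero, add_zero]
          exact hxsS.1 i
      have hysum : ∑ i, (xs i + t * δ i) = 1 + t := by
        rw [Finset.sum_add_distrib, hxsS.2, ← Finset.mul_sum, hsumδ, mul_one]
      have := hglobal (fun i => xs i + t * δ i) hy0
      rw [hysum] at this
      simpa [hF] using sub_nonneg.mpr this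
    have hder0 := hlocal.hasDerivAt_eq_zero hdF
    have hkeq : tcontr A xs k = μ := by
      have hm1 : (m + 1 : ℝ) ≠ 0 := by positivity
      have : (m + 1 : ℝ) * (tcontr A xs k - μ) = 0 := by linarith [hder0]
      have := mul_eq_zero.mp this
      rcases this with h | h
      · exact absurd h hm1
      · linarith
    rw [hkeq] at hkc
    exact absurd hkc (not_le.mpr hμneg)
  · -- Copos → SemiPos
    intro hc x hx0 hxne
    by_contra hno
    push_neg at hno
    have hx0' : ∀ i, 0 ≤ x i := fun i => hx0 i
    obtain ⟨j, hj⟩ : ∃ j, 0 < x j := by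
      obtain ⟨j, hj⟩ := Function.ne_iff.mp hxne
      exact ⟨j, lt_of_le_of_ne (hx0' j) (Ne.symm hj)⟩
    have hneg : tform A x < 0 := by
      rw [euler]
      have h1 : ∀ i ∈ Finset.univ, x i * tcontr A x i ≤ (fun _ => (0:ℝ)) i := by
        intro i _
        rcases eq_or_lt_of_le (hx0' i) with h | h
        · simp [← h]
        · exact mul_nonpos_of_nonneg_of_nonpos h.le (hno i h).le
      have h2 : ∃ i ∈ Finset.univ, x i * tcontr A x i < (fun _ => (0:ℝ)) i :=
        ⟨j, Finset.mem_univ j, mul_neg_of_pos_of_neg hj (hno j hj)⟩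
      calc ∑ i, x i * tcontr A x i < ∑ _i : Fin n, (0:ℝ) := Finset.sum_lt_sum h1 h2
        _ = 0 := by simp
    exact absurd (hc x hx0) (not_le.mpr hneg)
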